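/- Let k > 0, α > 0 be real, Λ ∈ ℂ, n a positive natural number. Define for ε > 0 the approximating transmission amplitude T_ε(k) = 2ik·D(ε)/N(ε) with D(ε) = −(sin kε/k)·(Λ/n) + cos kε + ((1−α)/(αεk))·sin kε and N(ε) = cos kε·Λ + n(k sin kε − ((1−α)/(αε))·cos kε) + (2ik − n(α−1)/ε)·D(ε). Then lim_{ε→0⁺} T_ε(k) = 2ik/(2ik + α²Λ), provided 2ik + α²Λ ≠ 0. -/

import Mathlib

set_option maxHeartbeats 1000000

open Filter Set

lemma aux_sin_div : Tendsto (fun x : ℝ => Real.sin x / x) (nhdsWithin 0 (Set.Ioi 0)) (nhds 1) := by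
  have h := (Real.hasDerivAt_sin 0)
  rw [hasDerivAt_iff_tendsto_slope] at h
  have h2 : Tendsto (slope Real.sin 0) (nhdsWithin 0 (Set.Ioi 0)) (nhds (Real.cos 0)) :=
    h.mono_left (nhdsWithin_mono _ (fun x hx => ne_of_gt hx))
  refine h2.congr' ?_ |>.mono_right (by rw [Real.cos_zero])
  filter_upwards with x
  simp [slope_fun_def, div_eq_inv_mul]

lemma aux_key : Tendsto (fun x : ℝ => (Real.sin x - x * Real.cos x) / x ^ 2)
    (nhdsWithin 0 (Set.Ioi 0)) (nhds 0) := by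
  have := HasDerivAt.lhopital_zero_nhdsGT
    (f := fun x : ℝ => Real.sin x - x * Real.cos x) (f' := fun x : ℝ => x * Real.sin x)
    (g := fun x : ℝ => x ^ 2) (g' := fun x : ℝ => 2 * x)
    (a := (0:ℝ)) (l := nhds 0) ?_ ?_ ?_ ?_ ?_ ?_
  · exact this
  · filter_upwards with x
    have h1 : HasDerivAt (fun x : ℝ => Real.sin x - x * Real.cos x) (Real.cos x - (1 * Real.cos x + x * (-Real.sin x))) x := by
      exact (Real.hasDerivAt_sin x).sub ((hasDerivAt_id x).mul (Real.hasDerivAt_cos x))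
    convert h1 using 1; ring
  · filter_upwards with x
    simpa using (hasDerivAt_pow 2 x)
  · filter_upwards [self_mem_nhdsWithin] with x hx
    have : (0:ℝ) < x := hx
    positivity
  · have : ContinuousAt (fun x : ℝ => Real.sin x - x * Real.cos x) 0 := by fun_prop
    have h0 := this.tendsto.mono_left (nhdsWithin_le_nhds (s := Set.Ioi 0))
    simpa using h0
  · have : ContinuousAt (fun x : ℝ => x ^ 2) (0:ℝ) := by fun_prop
    have h0 := this.tendsto.mono_left (nhdsWithin_le_nhds (s := Set.Ioi 0))
    simpa using h0
  · have : Tendsto (fun x : ℝ => Real.sin x / 2) (nhdsWithin 0 (Set.Ioi 0)) (nhds 0) := by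
      have : ContinuousAt (fun x : ℝ => Real.sin x / 2) (0:ℝ) := by fun_prop
      have h0 := this.tendsto.mono_left (nhdsWithin_le_nhds (s := Set.Ioi 0))
      simpa using h0
    refine this.congr' ?_
    filter_upwards [self_mem_nhdsWithin] with x hx
    have hx0 : x ≠ 0 := ne_of_gt hx
    field_simp

lemma aux_den (K A E N s c Λ : ℂ) (hk : K ≠ 0) (ha : A ≠ 0) (hn : N ≠ 0) (he : E ≠ 0) :
  (c * Λ + N * K * s
        + (2 * Complex.I * K) * (-(s / K) * (Λ / N) + c + ((1 - A) / A) * (s / (K * E)))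
        + N * (1 - A)^2 / (A * K) * ((s - K * E * c) / E ^ 2)
        - (1 - A) * Λ * (s / (K * E)))
      = (c * Λ + N * (K * s - ((1 - A) / (A * E)) * c) +
          (2 * Complex.I * K - N * ((A - 1) / E)) *
            (-(s / K) * (Λ / N) + c + ((1 - A) / (A * E * K) * s))) := by
  have hd : (A * K * E ^ 2 : ℂ) ≠ 0 :=
    mul_ne_zero (mul_ne_zero ha hk) (pow_ne_zero 2 he)
  have hD : (1 - A) / A * (s / (K * E)) = (1 - A) / (A * E * K) * s := by ring
  have h1 : N * ((A - 1) / E) * (-(s / K) * (Λ / N)) = -((A - 1) * Λ * (s / (K * E))) := by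
    field_simp
  have h2 : N * (1 - A)^2 * (s - K * E * c) / (A * K * E ^ 2)
      = -(N * (1 - A) * c / (A * E)) - N * (A - 1) * c / E
        - N * (A - 1) * (1 - A) * s / (A * E ^ 2 * K) := by
    have t1 : N * (1 - A) * c / (A * E) = N * (1 - A) * c * K * E / (A * K * E ^ 2) := by
      rw [div_eq_div_iff (mul_ne_zero ha he) hd]; ring
    have t2 : N * (A - 1) * c / E = N * (A - 1) * c * A * K * E / (A * K * E ^ 2) := by
      rw [div_eq_div_iff he hd]; ring
    rw [t1, t2]; ring
  linear_combination (2 * Complex.I * K - N * ((A - 1) / E)) * hD + h1 + h2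

theorem stmt_16 (k α : ℝ) (hk : 0 < k) (hα : 0 < α) (n : ℕ) (hn : 1 ≤ n) (Λ : ℂ)
    (hden : 2 * Complex.I * k + (α : ℂ)^2 * Λ ≠ 0) :
    Tendsto (fun ε : ℝ =>
        (2 * Complex.I * k *
          (-((Real.sin (k * ε) / k : ℝ) : ℂ) * (Λ / n) +
            ((Real.cos (k * ε) : ℝ) : ℂ) +
            (((1 - α) / (α * ε * k) * Real.sin (k * ε) : ℝ) : ℂ))) /
        (((Real.cos (k * ε) : ℝ) : ℂ) * Λ +
          (n : ℂ) * (((k * Real.sin (k * ε) : ℝ) : ℂ) -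
            (((1 - α) / (α * ε) : ℝ) : ℂ) * ((Real.cos (k * ε) : ℝ) : ℂ)) +
          (2 * Complex.I * k - (n : ℂ) * (((α - 1) / ε : ℝ) : ℂ)) *
            (-((Real.sin (k * ε) / k : ℝ) : ℂ) * (Λ / n) +
              ((Real.cos (k * ε) : ℝ) : ℂ) +
              (((1 - α) / (α * ε * k) * Real.sin (k * ε) : ℝ) : ℂ))))
      (nhdsWithin 0 (Set.Ioi 0))
      (nhds (2 * Complex.I * k / (2 * Complex.I * k + (α : ℂ)^2 * Λ))) := by
  have hk0 : (k:ℝ) ≠ 0 := ne_of_gt hk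
  have hα0 : (α:ℝ) ≠ 0 := ne_of_gt hα
  have hkC : (k:ℂ) ≠ 0 := by exact_mod_cast hk0
  have hαC : (α:ℂ) ≠ 0 := by exact_mod_cast hα0
  have hnC : (n:ℂ) ≠ 0 := by
    exact_mod_cast Nat.cast_ne_zero.mpr (by omega)
  set L := nhdsWithin (0:ℝ) (Set.Ioi 0) with hL
  have hx : Tendsto (fun ε : ℝ => k * ε) L L := by
    rw [hL]
    apply tendsto_nhdsWithin_of_tendsto_nhds_of_eventually_within
    · have : ContinuousAt (fun ε : ℝ => k * ε) 0 := by fun_prop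
      have h0 := this.tendsto.mono_left (nhdsWithin_le_nhds (s := Set.Ioi 0))
      simpa using h0
    · filter_upwards [self_mem_nhdsWithin] with x hx
      exact mul_pos hk hx
  -- real limits
  have hu : Tendsto (fun ε : ℝ => Real.sin (k * ε) / (k * ε)) L (nhds 1) := aux_sin_div.comp hx
  have hw0 := aux_key.comp hx
  have hw : Tendsto (fun ε : ℝ => (Real.sin (k * ε) - k * ε * Real.cos (k * ε)) / ε ^ 2) L (nhds 0) := by
    have h1 := hw0.const_mul (k^2)
    rw [mul_zero] at h1
    refine h1.congr' ?_
    filter_upwards [self_mem_nhdsWithin] with ε hε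
    have hε0 : (ε:ℝ) ≠ 0 := ne_of_gt hε
    simp only [Function.comp]
    field_simp
  have hs : Tendsto (fun ε : ℝ => Real.sin (k * ε)) L (nhds 0) := by
    have : ContinuousAt (fun ε : ℝ => Real.sin (k * ε)) 0 := by fun_prop
    have h0 := this.tendsto.mono_left (nhdsWithin_le_nhds (s := Set.Ioi 0))
    simpa using h0
  have hc : Tendsto (fun ε : ℝ => Real.cos (k * ε)) L (nhds 1) := by
    have : ContinuousAt (fun ε : ℝ => Real.cos (k * ε)) 0 := by fun_prop
    have h0 := this.tendsto.mono_left (nhdsWithin_le_nhds (s := Set.Ioi 0))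
    simpa using h0
  -- complex versions
  have cast1 : Tendsto (fun x : ℝ => (x : ℂ)) (nhds (1:ℝ)) (nhds 1) := by
    simpa using Complex.continuous_ofReal.tendsto 1
  have cast0 : Tendsto (fun x : ℝ => (x : ℂ)) (nhds (0:ℝ)) (nhds 0) := by
    simpa using Complex.continuous_ofReal.tendsto 0
  have hU : Tendsto (fun ε : ℝ => ((Real.sin (k * ε) / (k * ε) : ℝ) : ℂ)) L (nhds 1) := cast1.comp hu
  have hW : Tendsto (fun ε : ℝ => (((Real.sin (k * ε) - k * ε * Real.cos (k * ε)) / ε ^ 2 : ℝ) : ℂ)) L (nhds 0) := cast0.comp hw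
  have hS : Tendsto (fun ε : ℝ => ((Real.sin (k * ε) : ℝ) : ℂ)) L (nhds 0) := cast0.comp hs
  have hC : Tendsto (fun ε : ℝ => ((Real.cos (k * ε) : ℝ) : ℂ)) L (nhds 1) := cast1.comp hc
  -- D and its limit
  have hD : Tendsto (fun ε : ℝ =>
      -(((Real.sin (k * ε) : ℝ) : ℂ) / k) * (Λ / n) + ((Real.cos (k * ε) : ℝ) : ℂ)
        + ((1 - (α:ℂ)) / α) * ((Real.sin (k * ε) / (k * ε) : ℝ) : ℂ)) L
      (nhds (-((0:ℂ) / k) * (Λ / n) + 1 + ((1 - (α:ℂ)) / α) * 1)) :=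
    (((hS.div_const _).neg.mul_const _).add hC).add (hU.const_mul _)
  have hNum := hD.const_mul (2 * Complex.I * (k:ℂ))
  have hDen : Tendsto (fun ε : ℝ =>
      ((Real.cos (k * ε) : ℝ) : ℂ) * Λ + (n:ℂ) * k * ((Real.sin (k * ε) : ℝ) : ℂ)
        + (2 * Complex.I * k) * (-(((Real.sin (k * ε) : ℝ) : ℂ) / k) * (Λ / n) + ((Real.cos (k * ε) : ℝ) : ℂ)
            + ((1 - (α:ℂ)) / α) * ((Real.sin (k * ε) / (k * ε) : ℝ) : ℂ))
        + (n:ℂ) * (1 - (α:ℂ))^2 / ((α:ℂ) * k) * (((Real.sin (k * ε) - k * ε * Real.cos (k * ε)) / ε ^ 2 : ℝ) : ℂ)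
        - (1 - (α:ℂ)) * Λ * ((Real.sin (k * ε) / (k * ε) : ℝ) : ℂ)) L
      (nhds ((1:ℂ) * Λ + (n:ℂ) * k * 0
        + (2 * Complex.I * k) * (-((0:ℂ) / k) * (Λ / n) + 1 + ((1 - (α:ℂ)) / α) * 1)
        + (n:ℂ) * (1 - (α:ℂ))^2 / ((α:ℂ) * k) * 0 - (1 - (α:ℂ)) * Λ * 1)) :=
    ((((hC.mul_const Λ).add (hS.const_mul _)).add (hD.const_mul _)).add
      (hW.const_mul _)).sub (hU.const_mul _)
  have hDlim : ((1:ℂ) * Λ + (n:ℂ) * k * 0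
        + (2 * Complex.I * k) * (-((0:ℂ) / k) * (Λ / n) + 1 + ((1 - (α:ℂ)) / α) * 1)
        + (n:ℂ) * (1 - (α:ℂ))^2 / ((α:ℂ) * k) * 0 - (1 - (α:ℂ)) * Λ * 1)
      = (2 * Complex.I * k + (α:ℂ)^2 * Λ) / α := by
    field_simp
    ring
  have hne : ((1:ℂ) * Λ + (n:ℂ) * k * 0
        + (2 * Complex.I * k) * (-((0:ℂ) / k) * (Λ / n) + 1 + ((1 - (α:ℂ)) / α) * 1)
        + (n:ℂ) * (1 - (α:ℂ))^2 / ((α:ℂ) * k) * 0 - (1 - (α:ℂ)) * Λ * 1) ≠ 0 := by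
    rw [hDlim]
    exact div_ne_zero hden hαC
  have main := hNum.div hDen hne
  have hval : (2 * Complex.I * (k:ℂ)) * (-((0:ℂ) / k) * (Λ / n) + 1 + ((1 - (α:ℂ)) / α) * 1)
      / ((1:ℂ) * Λ + (n:ℂ) * k * 0
        + (2 * Complex.I * k) * (-((0:ℂ) / k) * (Λ / n) + 1 + ((1 - (α:ℂ)) / α) * 1)
        + (n:ℂ) * (1 - (α:ℂ))^2 / ((α:ℂ) * k) * 0 - (1 - (α:ℂ)) * Λ * 1)
      = 2 * Complex.I * k / (2 * Complex.I * k + (α:ℂ)^2 * Λ) := by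
    rw [hDlim]
    field_simp
    ring
  rw [← hval]
  refine Filter.Tendsto.congr' ?_ main
  filter_upwards [self_mem_nhdsWithin] with ε hε
  have hε0 : (ε:ℝ) ≠ 0 := ne_of_gt hε
  have hεC : (ε:ℂ) ≠ 0 := by exact_mod_cast hε0
  have e1 : (2 * Complex.I * (k:ℂ)) *
      (-(((Real.sin (k * ε) : ℝ) : ℂ) / k) * (Λ / n) + ((Real.cos (k * ε) : ℝ) : ℂ)
        + ((1 - (α:ℂ)) / α) * ((Real.sin (k * ε) / (k * ε) : ℝ) : ℂ))
      = (2 * Complex.I * k *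
          (-((Real.sin (k * ε) / k : ℝ) : ℂ) * (Λ / n) +
            ((Real.cos (k * ε) : ℝ) : ℂ) +
            (((1 - α) / (α * ε * k) * Real.sin (k * ε) : ℝ) : ℂ))) := by
    push_cast
    ring
  have e2 : (((Real.cos (k * ε) : ℝ) : ℂ) * Λ + (n:ℂ) * k * ((Real.sin (k * ε) : ℝ) : ℂ)
        + (2 * Complex.I * k) * (-(((Real.sin (k * ε) : ℝ) : ℂ) / k) * (Λ / n) + ((Real.cos (k * ε) : ℝ) : ℂ)
            + ((1 - (α:ℂ)) / α) * ((Real.sin (k * ε) / (k * ε) : ℝ) : ℂ))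
        + (n:ℂ) * (1 - (α:ℂ))^2 / ((α:ℂ) * k) * (((Real.sin (k * ε) - k * ε * Real.cos (k * ε)) / ε ^ 2 : ℝ) : ℂ)
        - (1 - (α:ℂ)) * Λ * ((Real.sin (k * ε) / (k * ε) : ℝ) : ℂ))
      = (((Real.cos (k * ε) : ℝ) : ℂ) * Λ +
          (n : ℂ) * (((k * Real.sin (k * ε) : ℝ) : ℂ) -
            (((1 - α) / (α * ε) : ℝ) : ℂ) * ((Real.cos (k * ε) : ℝ) : ℂ)) +
          (2 * Complex.I * k - (n : ℂ) * (((α - 1) / ε : ℝ) : ℂ)) *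
            (-((Real.sin (k * ε) / k : ℝ) : ℂ) * (Λ / n) +
              ((Real.cos (k * ε) : ℝ) : ℂ) +
              (((1 - α) / (α * ε * k) * Real.sin (k * ε) : ℝ) : ℂ))) := by
    push_cast
    linear_combination aux_den (k:ℂ) (α:ℂ) (ε:ℂ) (n:ℂ) (Complex.sin (k*ε)) (Complex.cos (k*ε)) Λ hkC hαC hnC hεC
  simp only [Pi.div_apply]
  rw [e2, e1]
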